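/- arXiv:2605.26222 — 3 statements merged into one kernel-verified Lean document; each statement's English description precedes it below -/
import Mathlib

section
/- Let A ≥ 0 satisfy E[exp(λ(A − E[A]))] ≤ exp(λ²ν/2) for all λ ∈ R and E[A²] ≤ ν, E[A] ≤ √ν, and suppose C = (A − E[A])² satisfies E[exp(λ(C − E[C]))] ≤ exp(8ν²λ²/(1−2νλ)) for λ ∈ (0, 1/(2ν)). Then D = A² satisfies, for all λ ∈ (0, 1/(2ν)), E[exp(λ D)] ≤ exp((16λ²ν² + λν)/(1 − 2νλ)). -/
open MeasureTheory ProbabilityTheory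
open scoped ENNReal

set_option maxHeartbeats 1000000 in
/-- MGF bound for `D = A²`: from a subgaussian MGF bound for `A - E[A]`, moment bounds
`E[A²] ≤ ν`, `E[A] ≤ √ν`, and a Bernstein MGF bound for `C = (A - E[A])²`, it follows that
`E[exp(λ A²)] ≤ exp((16λ²ν² + λν)/(1 - 2νλ))` for all `λ ∈ (0, 1/(2ν))`. -/
theorem stmt_10 {Ω : Type*} [MeasurableSpace Ω] (P : Measure Ω) [IsProbabilityMeasure P]
    (ν : ℝ) (hν : 0 < ν) (A : Ω → ℝ) (hAmeas : Measurable A)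
    (hA0 : ∀ ω, 0 ≤ A ω) (hAint : Integrable A P)
    (hAmgf : ∀ l : ℝ,
      ∫⁻ ω, ENNReal.ofReal (Real.exp (l * (A ω - ∫ ω', A ω' ∂P))) ∂P
        ≤ ENNReal.ofReal (Real.exp (l ^ 2 * ν / 2)))
    (hA2 : ∫ ω, A ω ^ 2 ∂P ≤ ν)
    (hA1 : ∫ ω, A ω ∂P ≤ Real.sqrt ν)
    (C : Ω → ℝ) (hC : C = fun ω => (A ω - ∫ ω', A ω' ∂P) ^ 2)
    (hCint : Integrable C P)
    (hCmgf : ∀ l : ℝ, l ∈ Set.Ioo (0 : ℝ) (1 / (2 * ν)) →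
      ∫⁻ ω, ENNReal.ofReal (Real.exp (l * (C ω - ∫ ω', C ω' ∂P))) ∂P
        ≤ ENNReal.ofReal (Real.exp (8 * ν ^ 2 * l ^ 2 / (1 - 2 * ν * l)))) :
    ∀ l : ℝ, l ∈ Set.Ioo (0 : ℝ) (1 / (2 * ν)) →
      ∫⁻ ω, ENNReal.ofReal (Real.exp (l * A ω ^ 2)) ∂P
        ≤ ENNReal.ofReal (Real.exp ((16 * l ^ 2 * ν ^ 2 + l * ν) / (1 - 2 * ν * l))) := by
  intro l hl
  obtain ⟨hl0, hlu⟩ := hl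
  set μ := ∫ ω', A ω' ∂P with hμdef
  clear_value μ
  have h2ν : (0:ℝ) < 2 * ν := by linarith
  have ht : 2 * ν * l < 1 := by
    have := (lt_div_iff₀ h2ν).mp hlu
    nlinarith
  have h1 : (0:ℝ) < 1 - 2 * ν * l := by linarith
  have hνl : 0 < ν * l := mul_pos hν hl0
  have hd2 : (0:ℝ) < 2 + 2 * ν * l := by linarith
  have hμ0 : 0 ≤ μ := by rw [hμdef]; exact integral_nonneg hA0
  have hμν : μ ^ 2 ≤ ν := by
    nlinarith [hA1, Real.sq_sqrt hν.le, Real.sqrt_nonneg ν]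
  set p := 3 / (2 + 2 * ν * l) with hpdef
  set q := 3 / (1 - 2 * ν * l) with hqdef
  clear_value p q
  have hp0 : 0 < p := by rw [hpdef]; exact div_pos (by norm_num) hd2
  have hq0 : 0 < q := by rw [hqdef]; exact div_pos (by norm_num) h1
  have hp1 : 1 < p := by rw [hpdef]; exact (one_lt_div hd2).mpr (by linarith)
  have hpq : Real.HolderConjugate p q := by
    refine Real.holderConjugate_iff.mpr ⟨hp1, ?_⟩
    rw [hpdef, hqdef]
    field_simp
    ring
  -- integrability and mean of A²
  have hA2int : Integrable (fun ω => A ω ^ 2) P := by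
    have hfun : (fun ω => A ω ^ 2) = fun ω => C ω + (2 * μ * A ω - μ ^ 2) := by
      funext ω; simp only [hC]; ring
    rw [hfun]
    exact hCint.add ((hAint.const_mul _).sub (integrable_const _))
  set I2 := ∫ ω, A ω ^ 2 ∂P with hI2def
  clear_value I2
  set EC := ∫ ω, C ω ∂P with hECdef
  clear_value EC
  have hsub : Integrable (fun ω => 2 * μ * A ω - μ ^ 2) P :=
    (hAint.const_mul _).sub (integrable_const _)
  have hEC : EC = I2 - μ ^ 2 := by
    have h0 : I2 = EC + μ ^ 2 := by
      calc I2 = ∫ ω, (C ω + (2 * μ * A ω - μ ^ 2)) ∂P := by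
            rw [hI2def]
            apply integral_congr_ae
            filter_upwards with ω
            simp only [hC]; ring
        _ = EC + ((2 * μ) * μ - μ ^ 2) := by
            rw [integral_add hCint hsub,
              integral_sub (hAint.const_mul (2 * μ)) (integrable_const _),
              integral_const_mul, integral_const]
            simp only [measure_univ, ENNReal.toReal_one, smul_eq_mul, one_mul, probReal_univ]
            rw [← hμdef, ← hECdef]
        _ = EC + μ ^ 2 := by ring
    linarith
  -- pointwise decomposition
  set f : Ω → ℝ≥0∞ := fun ω => ENNReal.ofReal (Real.exp (l * (C ω - EC))) with hfdef
  set g : Ω → ℝ≥0∞ := fun ω => ENNReal.ofReal (Real.exp ((2 * μ * l) * (A ω - μ))) with hgdef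
  clear_value f g
  have hCmeas : Measurable C := by
    rw [hC]; exact (hAmeas.sub measurable_const).pow_const 2
  have hfmeas : Measurable f := by
    rw [hfdef]
    exact (((hCmeas.sub measurable_const).const_mul l).exp).ennreal_ofReal
  have hgmeas : Measurable g := by
    rw [hgdef]
    exact (((hAmeas.sub measurable_const).const_mul _).exp).ennreal_ofReal
  have hsplit : ∀ ω, ENNReal.ofReal (Real.exp (l * A ω ^ 2))
      = ENNReal.ofReal (Real.exp (l * I2)) * ((f * g) ω) := by
    intro ω
    simp only [Pi.mul_apply, hfdef, hgdef]
    rw [← ENNReal.ofReal_mul (Real.exp_nonneg _), ← ENNReal.ofReal_mul (Real.exp_nonneg _),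
      ← Real.exp_add, ← Real.exp_add]
    congr 1
    congr 1
    simp only [hC, hEC]
    ring
  -- bound the f-factor
  have hmemp : p * l ∈ Set.Ioo (0 : ℝ) (1 / (2 * ν)) := by
    constructor
    · exact mul_pos hp0 hl0
    · rw [lt_div_iff₀ h2ν, hpdef, div_mul_eq_mul_div, div_mul_eq_mul_div, div_lt_one hd2]
      nlinarith
  have hfp : ∫⁻ ω, f ω ^ p ∂P
      ≤ ENNReal.ofReal (Real.exp (8 * ν ^ 2 * (p * l) ^ 2 / (1 - 2 * ν * (p * l)))) := by
    have heq : ∀ ω, f ω ^ p = ENNReal.ofReal (Real.exp ((p * l) * (C ω - EC))) := by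
      intro ω
      rw [hfdef]
      rw [ENNReal.ofReal_rpow_of_pos (Real.exp_pos _), ← Real.exp_mul]
      ring_nf
    calc ∫⁻ ω, f ω ^ p ∂P = ∫⁻ ω, ENNReal.ofReal (Real.exp ((p * l) * (C ω - EC))) ∂P :=
          lintegral_congr heq
      _ ≤ _ := hCmgf (p * l) hmemp
  -- bound the g-factor
  have hgq : ∫⁻ ω, g ω ^ q ∂P
      ≤ ENNReal.ofReal (Real.exp ((2 * μ * l * q) ^ 2 * ν / 2)) := by
    have heq : ∀ ω, g ω ^ q = ENNReal.ofReal (Real.exp ((2 * μ * l * q) * (A ω - μ))) := by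
      intro ω
      rw [hgdef]
      rw [ENNReal.ofReal_rpow_of_pos (Real.exp_pos _), ← Real.exp_mul]
      ring_nf
    calc ∫⁻ ω, g ω ^ q ∂P = ∫⁻ ω, ENNReal.ofReal (Real.exp ((2 * μ * l * q) * (A ω - μ))) ∂P :=
          lintegral_congr heq
      _ ≤ _ := hAmgf (2 * μ * l * q)
  -- Hölder
  have hholder : ∫⁻ ω, (f * g) ω ∂P
      ≤ (∫⁻ ω, f ω ^ p ∂P) ^ (1 / p) * (∫⁻ ω, g ω ^ q ∂P) ^ (1 / q) :=
    ENNReal.lintegral_mul_le_Lp_mul_Lq P hpq hfmeas.aemeasurable hgmeas.aemeasurable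
  -- combine
  have hrpow1 : (∫⁻ ω, f ω ^ p ∂P) ^ (1 / p)
      ≤ ENNReal.ofReal (Real.exp (8 * ν ^ 2 * (p * l) ^ 2 / (1 - 2 * ν * (p * l)) / p)) := by
    calc (∫⁻ ω, f ω ^ p ∂P) ^ (1 / p)
        ≤ (ENNReal.ofReal (Real.exp (8 * ν ^ 2 * (p * l) ^ 2 / (1 - 2 * ν * (p * l))))) ^ (1 / p) :=
          ENNReal.rpow_le_rpow hfp (by positivity)
      _ = _ := by
          rw [ENNReal.ofReal_rpow_of_pos (Real.exp_pos _), ← Real.exp_mul]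
          rw [mul_one_div]
  have hrpow2 : (∫⁻ ω, g ω ^ q ∂P) ^ (1 / q)
      ≤ ENNReal.ofReal (Real.exp ((2 * μ * l * q) ^ 2 * ν / 2 / q)) := by
    calc (∫⁻ ω, g ω ^ q ∂P) ^ (1 / q)
        ≤ (ENNReal.ofReal (Real.exp ((2 * μ * l * q) ^ 2 * ν / 2))) ^ (1 / q) :=
          ENNReal.rpow_le_rpow hgq (by positivity)
      _ = _ := by
          rw [ENNReal.ofReal_rpow_of_pos (Real.exp_pos _), ← Real.exp_mul]
          rw [mul_one_div]
  -- real arithmetic for the exponent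
  have hBc : 8 * ν ^ 2 * (p * l) ^ 2 / (1 - 2 * ν * (p * l)) / p
      = 12 * ν ^ 2 * l ^ 2 / (1 - 2 * ν * l) := by
    rw [hpdef]
    rw [show (1 - 2 * ν * (3 / (2 + 2 * ν * l) * l)) = (2 - 4 * ν * l) / (2 + 2 * ν * l) by
      field_simp; ring]
    have h24 : (2 : ℝ) - 4 * ν * l ≠ 0 := by nlinarith
    have h1' : (1 : ℝ) - 2 * ν * l ≠ 0 := h1.ne'
    field_simp
    rw [div_eq_div_iff (by nlinarith) (by nlinarith)]
    ring
  have hBa : (2 * μ * l * q) ^ 2 * ν / 2 / q ≤ 6 * ν ^ 2 * l ^ 2 / (1 - 2 * ν * l) := by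
    have h0 : (2 * μ * l * q) ^ 2 * ν / 2 / q = 6 * (ν * μ ^ 2) * l ^ 2 / (1 - 2 * ν * l) := by
      rw [hqdef]
      field_simp
      ring
    rw [h0]
    gcongr
    nlinarith
  have hI2ν : l * I2 ≤ l * ν := by nlinarith [hA2]
  have hsum : 12 * ν ^ 2 * l ^ 2 / (1 - 2 * ν * l) + 6 * ν ^ 2 * l ^ 2 / (1 - 2 * ν * l) + l * ν
      = (16 * l ^ 2 * ν ^ 2 + l * ν) / (1 - 2 * ν * l) := by
    have h1' : (1 : ℝ) - 2 * ν * l ≠ 0 := h1.ne'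
    rw [← add_div, div_add' _ _ _ h1']
    congr 1
    ring
  have hfinal : l * I2 + (8 * ν ^ 2 * (p * l) ^ 2 / (1 - 2 * ν * (p * l)) / p
      + (2 * μ * l * q) ^ 2 * ν / 2 / q) ≤ (16 * l ^ 2 * ν ^ 2 + l * ν) / (1 - 2 * ν * l) := by
    rw [hBc]
    linarith
  -- put everything together
  calc ∫⁻ ω, ENNReal.ofReal (Real.exp (l * A ω ^ 2)) ∂P
      = ∫⁻ ω, ENNReal.ofReal (Real.exp (l * I2)) * ((f * g) ω) ∂P :=
        lintegral_congr hsplit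
    _ = ENNReal.ofReal (Real.exp (l * I2)) * ∫⁻ ω, (f * g) ω ∂P :=
        lintegral_const_mul' _ _ ENNReal.ofReal_ne_top
    _ ≤ ENNReal.ofReal (Real.exp (l * I2)) *
        ((∫⁻ ω, f ω ^ p ∂P) ^ (1 / p) * (∫⁻ ω, g ω ^ q ∂P) ^ (1 / q)) :=
        mul_le_mul_right hholder _
    _ ≤ ENNReal.ofReal (Real.exp (l * I2)) *
        (ENNReal.ofReal (Real.exp (8 * ν ^ 2 * (p * l) ^ 2 / (1 - 2 * ν * (p * l)) / p)) *
          ENNReal.ofReal (Real.exp ((2 * μ * l * q) ^ 2 * ν / 2 / q))) :=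
        mul_le_mul_right (mul_le_mul' hrpow1 hrpow2) _
    _ = ENNReal.ofReal (Real.exp (l * I2 + (8 * ν ^ 2 * (p * l) ^ 2 / (1 - 2 * ν * (p * l)) / p
          + (2 * μ * l * q) ^ 2 * ν / 2 / q))) := by
        rw [← ENNReal.ofReal_mul (Real.exp_nonneg _), ← ENNReal.ofReal_mul (Real.exp_nonneg _),
          ← Real.exp_add, ← Real.exp_add]
    _ ≤ ENNReal.ofReal (Real.exp ((16 * l ^ 2 * ν ^ 2 + l * ν) / (1 - 2 * ν * l))) := by
        exact ENNReal.ofReal_le_ofReal (Real.exp_le_exp.mpr hfinal)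
end

section
/- For ν > 0, T ≥ 1, β ∈ (0,1), and r_ν = √(1/ν + 1/4) − 1/2, the quantity τ = inf_{λ∈(0,r_ν)} (1/λ)[T·F((λ+λ²)/2) + log(1/β)] with F(x) = (16ν²x² + νx)/(1−2νx) satisfies τ ≤ T(ν + min{1,√ν})(1/2 + 3q + q²/2), where q = √((2/T)·log(1/β)). -/
set_option maxHeartbeats 1000000


/-- Explicit bound on the optimized Chernoff exponent:
`τ = inf_{λ∈(0,r_ν)} (1/λ)[T·F((λ+λ²)/2) + log(1/β)]` satisfies
`τ ≤ T(ν + min{1,√ν})(1/2 + 3q + q²/2)` for `q = √((2/T) log(1/β))`. -/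
theorem stmt_15 (ν T β : ℝ) (hν : 0 < ν) (hT : 1 ≤ T) (hβ : β ∈ Set.Ioo (0 : ℝ) 1)
    (F : ℝ → ℝ) (hF : F = fun x => (16 * ν ^ 2 * x ^ 2 + ν * x) / (1 - 2 * ν * x))
    (rν : ℝ) (hr : rν = Real.sqrt (1 / ν + 1 / 4) - 1 / 2)
    (q : ℝ) (hq : q = Real.sqrt ((2 / T) * Real.log (1 / β)))
    (τ : ℝ)
    (hτ : τ = sInf ((fun l => (1 / l) * (T * F ((l + l ^ 2) / 2) + Real.log (1 / β)))
      '' Set.Ioo (0 : ℝ) rν)) :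
    τ ≤ T * (ν + min 1 (Real.sqrt ν)) * (1 / 2 + 3 * q + q ^ 2 / 2) := by
  obtain ⟨hβ0, hβ1⟩ := hβ
  have hT0 : (0:ℝ) < T := by linarith
  have hℓ : 0 < Real.log (1/β) := Real.log_pos (by rw [lt_div_iff₀ hβ0]; nlinarith)
  set ℓ := Real.log (1/β) with hℓdef
  clear_value ℓ
  have hq0 : 0 < q := by rw [hq]; exact Real.sqrt_pos.mpr (by positivity)
  have hq2 : q^2 = 2/T * ℓ := by
    rw [hq]; exact Real.sq_sqrt (by positivity)
  obtain ⟨u, hudef⟩ : ∃ u : ℝ, u = q/(q+3) := ⟨_, rfl⟩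
  have hq3 : (0:ℝ) < q + 3 := by linarith
  have hu0 : 0 < u := by rw [hudef]; positivity
  have hu1 : u < 1 := by rw [hudef]; exact (div_lt_one hq3).mpr (by linarith)
  -- rν facts
  obtain ⟨t, htdef⟩ : ∃ t : ℝ, t = Real.sqrt (1/ν + 1/4) := ⟨_, rfl⟩
  have ht2 : t^2 = 1/ν + 1/4 := by rw [htdef]; exact Real.sq_sqrt (by positivity)
  have ht0 : 0 ≤ t := htdef ▸ Real.sqrt_nonneg _
  have htgt : 1/2 < t := by nlinarith [one_div_pos.mpr hν]
  have hr' : rν = t - 1/2 := by rw [hr, htdef]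
  have hr0 : 0 < rν := by rw [hr']; linarith
  have hur : ν * (rν + rν^2) = 1 := by
    have h1 : rν + rν^2 = 1/ν := by rw [hr']; linear_combination ht2
    rw [h1]; field_simp
  -- λ
  obtain ⟨s, hsdef⟩ : ∃ s : ℝ, s = Real.sqrt (u/ν + 1/4) := ⟨_, rfl⟩
  have hs2 : s^2 = u/ν + 1/4 := by rw [hsdef]; exact Real.sq_sqrt (by positivity)
  have hs0 : 0 ≤ s := hsdef ▸ Real.sqrt_nonneg _
  have hsgt : 1/2 < s := by nlinarith [div_pos hu0 hν]
  obtain ⟨l, hldef⟩ : ∃ l : ℝ, l = s - 1/2 := ⟨_, rfl⟩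
  have hl0 : 0 < l := by rw [hldef]; linarith
  have hul : ν * (l + l^2) = u := by
    have h1 : l + l^2 = u/ν := by rw [hldef]; linear_combination hs2
    rw [h1]; field_simp
  have hlr : l < rν := by
    have hst : s < t := by
      rw [hsdef, htdef]
      apply Real.sqrt_lt_sqrt (by positivity)
      have : u/ν < 1/ν := by gcongr
      linarith
    rw [hr', hldef]; linarith
  -- ν rν ≤ min 1 √ν
  obtain ⟨w, hwdef⟩ : ∃ w : ℝ, w = Real.sqrt ν := ⟨_, rfl⟩
  have hw2 : w^2 = ν := by rw [hwdef]; exact Real.sq_sqrt hν.le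
  have hw0 : 0 ≤ w := hwdef ▸ Real.sqrt_nonneg _
  have hm : ν * rν ≤ min 1 w := by
    apply le_min
    · nlinarith [hur, mul_pos hν hr0, mul_pos (mul_pos hν hr0) hr0]
    · have h1 : (w*rν)^2 ≤ 1 := by nlinarith [hur, hw2, mul_pos hν hr0]
      have h2 : w*rν ≤ 1 := by nlinarith [mul_nonneg hw0 hr0.le, h1]
      nlinarith [hw2, h2, hw0, hr0]
  -- the set is bounded below by 0
  have hBdd : ∀ y ∈ ((fun l => (1 / l) * (T * F ((l + l ^ 2) / 2) + ℓ))
      '' Set.Ioo (0 : ℝ) rν), (0:ℝ) ≤ y := by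
    rintro y ⟨a, ⟨ha0, har⟩, rfl⟩
    have h1 : a + a^2 < rν + rν^2 := by nlinarith [ha0, har, hr0]
    have h2 : ν * (a + a^2) < 1 := by
      calc ν * (a + a^2) < ν * (rν + rν^2) := mul_lt_mul_of_pos_left h1 hν
        _ = 1 := hur
    have hden : 0 < 1 - 2*ν*((a + a^2)/2) := by linarith
    have hFa : 0 ≤ F ((a + a^2)/2) := by
      rw [hF]
      refine div_nonneg ?_ hden.le
      have ha2 : 0 ≤ (a + a^2)/2 := by positivity
      positivity
    have h0 : 0 ≤ F ((a + a^2)/2 : ℝ) := hFa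
    simp only []
    positivity
  -- value at l
  have hlne : l ≠ 0 := ne_of_gt hl0
  have hℓval : ℓ = q^2*T/2 := by rw [hq2]; field_simp
  have hul' : ν * (l + l^2) = q/(q+3) := by rw [← hudef]; exact hul
  have hX : ν * (l + l^2) * (q+3) = q := by rw [hul']; field_simp
  have hden : 1 - 2*ν*((l + l^2)/2) = 3/(q+3) := by
    rw [eq_div_iff (ne_of_gt hq3)]
    linear_combination (-1 : ℝ) * hX
  have hval : (1 / l) * (T * F ((l + l ^ 2) / 2) + ℓ)
      = T * (ν * (1 + l)) * (1/2 + 3*q + q^2/2) := by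
    rw [hF]
    show (1 / l) * (T * ((16 * ν ^ 2 * ((l + l^2)/2) ^ 2 + ν * ((l + l^2)/2)) /
        (1 - 2 * ν * ((l + l^2)/2))) + ℓ) = _
    rw [hden, hℓval, div_div_eq_mul_div]
    have hG : T * ((16*ν^2*((l+l^2)/2)^2 + ν*((l+l^2)/2)) * (q+3) / 3) + q^2*T/2
        = T * (ν*(l+l^2)) * (1/2+3*q+q^2/2) := by
      linear_combination (T*(4/3*ν*(l+l^2) - q/2)) * hX
    rw [hG, show T * (ν*(l+l^2))*(1/2+3*q+q^2/2)
        = l * (T*(ν*(1+l))*(1/2+3*q+q^2/2)) from by ring,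
      one_div, inv_mul_cancel_left₀ hlne]
  -- conclude
  have hmem : (1 / l) * (T * F ((l + l ^ 2) / 2) + ℓ) ∈
      ((fun l => (1 / l) * (T * F ((l + l ^ 2) / 2) + ℓ)) '' Set.Ioo (0 : ℝ) rν) :=
    ⟨l, ⟨hl0, hlr⟩, rfl⟩
  have hle : τ ≤ (1 / l) * (T * F ((l + l ^ 2) / 2) + ℓ) := by
    rw [hτ]
    exact csInf_le ⟨0, fun y hy => hBdd y hy⟩ hmem
  have hC : (0:ℝ) ≤ 1/2 + 3*q + q^2/2 := by positivity
  have hfinal : T * (ν * (1 + l)) * (1/2 + 3*q + q^2/2)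
      ≤ T * (ν + min 1 w) * (1/2 + 3*q + q^2/2) := by
    have h4 : ν * l ≤ ν * rν := (mul_le_mul_iff_right₀ hν).mpr hlr.le
    have h3 : ν * (1 + l) ≤ ν + min 1 w := by
      have := le_trans h4 hm; linarith [mul_pos hν hl0]
    have h5 : 0 ≤ ν + min 1 w := by positivity
    have := mul_le_mul_of_nonneg_right h3 hC
    calc T * (ν * (1 + l)) * (1/2 + 3*q + q^2/2)
        = T * ((ν * (1 + l)) * (1/2 + 3*q + q^2/2)) := by ring
      _ ≤ T * ((ν + min 1 w) * (1/2 + 3*q + q^2/2)) := by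
          exact mul_le_mul_of_nonneg_left this hT0.le
      _ = T * (ν + min 1 w) * (1/2 + 3*q + q^2/2) := by ring
  rw [hwdef] at hfinal
  linarith [hval ▸ hle]
end

section
/- Define R(α, β) = [3/4 + (1/2)√(log((1+α/2)/β)) + (1/4)log((1+α/2)/β)] / log(1.25/β). For α ∈ (0,3] and β ∈ (0, 1/2], R is strictly increasing in α and strictly increasing in β, and satisfies 1/4 ≤ R(α, β) ≤ 2. -/
private lemma aux_beta (D₁ D₂ L₁ L₂ e : ℝ) (hD1 : (0.909:ℝ) < D₁) (hD2 : (0.909:ℝ) < D₂)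
    (hDlt : D₂ < D₁) (hL1p : 0 < L₁) (hL2p : 0 < L₂)
    (hL1e : L₁ = D₁ + e) (hL2e : L₂ = D₂ + e) (heb : -(1/4:ℝ) < e) :
    (3/4 + 1/2 * Real.sqrt L₁ + 1/4 * L₁) / D₁
      < (3/4 + 1/2 * Real.sqrt L₂ + 1/4 * L₂) / D₂ := by
  have hD1p : (0:ℝ) < D₁ := by linarith
  have hD2p : (0:ℝ) < D₂ := by linarith
  have hpos : 0 < D₁*D₂ + e*(D₁+D₂) := by
    nlinarith [mul_pos (show (0:ℝ) < D₁ - 0.909 by linarith)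
      (show (0:ℝ) < D₂ - 0.25 by linarith),
      mul_pos (show (0:ℝ) < e + 1/4 by linarith)
      (show (0:ℝ) < D₁ + D₂ by linarith)]
  have hsq : L₁ * D₂^2 < L₂ * D₁^2 := by
    rw [hL1e, hL2e]
    nlinarith [mul_pos (sub_pos.mpr hDlt) hpos]
  have hs : Real.sqrt L₁ * D₂ < Real.sqrt L₂ * D₁ := by
    have h1 : Real.sqrt (L₁ * D₂^2) < Real.sqrt (L₂ * D₁^2) :=
      Real.sqrt_lt_sqrt (by positivity) hsq
    rwa [Real.sqrt_mul hL1p.le, Real.sqrt_mul hL2p.le,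
      Real.sqrt_sq hD2p.le, Real.sqrt_sq hD1p.le] at h1
  rw [div_lt_div_iff₀ hD1p hD2p]
  nlinarith [hs, mul_pos (sub_pos.mpr hDlt) (show (0:ℝ) < 3/4 + e/4 by linarith)]

private lemma aux_bounds (D L : ℝ) (hD : (0.909:ℝ) < D) (hLp : 0 < L)
    (hDL : D ≤ L + 1/4) (hLD : L ≤ D + 0.6931471808) :
    1/4 ≤ (3/4 + 1/2 * Real.sqrt L + 1/4 * L) / D
      ∧ (3/4 + 1/2 * Real.sqrt L + 1/4 * L) / D ≤ 2 := by
  have hDp : (0:ℝ) < D := by linarith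
  have hsnn : 0 ≤ Real.sqrt L := Real.sqrt_nonneg L
  have hsq : Real.sqrt L ^ 2 = L := Real.sq_sqrt hLp.le
  constructor
  · rw [le_div_iff₀ hDp]
    linarith
  · rw [div_le_iff₀ hDp]
    nlinarith [sq_nonneg (Real.sqrt L - 1)]

/-- Monotonicity and bounds for
`R(α,β) = [3/4 + ½√(log((1+α/2)/β)) + ¼ log((1+α/2)/β)] / log(1.25/β)`
on `α ∈ (0,3]`, `β ∈ (0,1/2]`: strictly increasing in each argument, and `1/4 ≤ R ≤ 2`. -/
theorem stmt_16 (R : ℝ → ℝ → ℝ)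
    (hR : R = fun α β =>
      (3 / 4 + (1 / 2) * Real.sqrt (Real.log ((1 + α / 2) / β))
        + (1 / 4) * Real.log ((1 + α / 2) / β)) / Real.log (1.25 / β)) :
    (∀ β ∈ Set.Ioc (0 : ℝ) (1 / 2), ∀ α₁ ∈ Set.Ioc (0 : ℝ) 3, ∀ α₂ ∈ Set.Ioc (0 : ℝ) 3,
      α₁ < α₂ → R α₁ β < R α₂ β)
    ∧ (∀ α ∈ Set.Ioc (0 : ℝ) 3, ∀ β₁ ∈ Set.Ioc (0 : ℝ) (1 / 2), ∀ β₂ ∈ Set.Ioc (0 : ℝ) (1 / 2),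
      β₁ < β₂ → R α β₁ < R α β₂)
    ∧ (∀ α ∈ Set.Ioc (0 : ℝ) 3, ∀ β ∈ Set.Ioc (0 : ℝ) (1 / 2),
      1 / 4 ≤ R α β ∧ R α β ≤ 2) := by
  subst hR
  have hlog2l := Real.log_two_gt_d9
  have hlog2u := Real.log_two_lt_d9
  have hlog25 : (0.909:ℝ) < Real.log 2.5 := by
    have h1 : (2:ℝ)^(21:ℕ) < 2.5^(16:ℕ) := by norm_num
    have h2 := Real.log_lt_log (by positivity) h1
    rw [Real.log_pow, Real.log_pow] at h2
    push_cast at h2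
    linarith
  have hlog125 : Real.log 1.25 ≤ 0.25 := by
    have := Real.log_le_sub_one_of_pos (x := 1.25) (by norm_num)
    linarith
  have hDge : ∀ β : ℝ, 0 < β → β ≤ 1/2 → (0.909:ℝ) < Real.log (1.25/β) := by
    intro β hβ0 hβ
    have h1 : (2.5:ℝ) ≤ 1.25/β := by rw [le_div_iff₀ hβ0]; nlinarith
    have := Real.log_le_log (by norm_num) h1
    linarith
  have hLge : ∀ α β : ℝ, 0 < α → 0 < β → β ≤ 1/2 →
      Real.log 2 ≤ Real.log ((1+α/2)/β) := by
    intro α β hα hβ0 hβ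
    have h1 : (2:ℝ) ≤ (1+α/2)/β := by rw [le_div_iff₀ hβ0]; nlinarith
    exact Real.log_le_log (by norm_num) h1
  have hdiff : ∀ α β : ℝ, 0 < α → 0 < β →
      Real.log ((1+α/2)/β) - Real.log (1.25/β)
        = Real.log (1+α/2) - Real.log 1.25 := by
    intro α β hα hβ
    rw [Real.log_div (by linarith : (0:ℝ) < 1+α/2).ne' hβ.ne',
      Real.log_div (by norm_num : (1.25:ℝ) ≠ 0) hβ.ne']
    ring
  refine ⟨?_, ?_, ?_⟩
  · -- strictly increasing in α
    rintro β ⟨hβ0, hβ⟩ α₁ ⟨hα₁, _⟩ α₂ ⟨hα₂, _⟩ h12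
    simp only
    have hD : (0:ℝ) < Real.log (1.25/β) := by have := hDge β hβ0 hβ; linarith
    have hL1 : Real.log 2 ≤ Real.log ((1+α₁/2)/β) := hLge α₁ β hα₁ hβ0 hβ
    have hLlt : Real.log ((1+α₁/2)/β) < Real.log ((1+α₂/2)/β) := by
      apply Real.log_lt_log (div_pos (by linarith) hβ0)
      rw [div_lt_div_iff₀ hβ0 hβ0]; nlinarith
    have hs : Real.sqrt (Real.log ((1+α₁/2)/β)) < Real.sqrt (Real.log ((1+α₂/2)/β)) :=
      Real.sqrt_lt_sqrt (by linarith) hLlt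
    have hN : 3/4 + 1/2 * Real.sqrt (Real.log ((1+α₁/2)/β)) + 1/4 * Real.log ((1+α₁/2)/β)
        < 3/4 + 1/2 * Real.sqrt (Real.log ((1+α₂/2)/β)) + 1/4 * Real.log ((1+α₂/2)/β) := by
      linarith
    exact div_lt_div_of_pos_right hN hD
  · -- strictly increasing in β
    rintro α ⟨hα0, hα3⟩ β₁ ⟨hb10, hb1⟩ β₂ ⟨hb20, hb2⟩ h12
    simp only
    have hD1 : (0.909:ℝ) < Real.log (1.25/β₁) := hDge β₁ hb10 (by linarith)
    have hD2 : (0.909:ℝ) < Real.log (1.25/β₂) := hDge β₂ hb20 hb2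
    have hDlt : Real.log (1.25/β₂) < Real.log (1.25/β₁) := by
      apply Real.log_lt_log (div_pos (by norm_num) hb20)
      rw [div_lt_div_iff₀ hb20 hb10]; nlinarith
    have hL1 : Real.log 2 ≤ Real.log ((1+α/2)/β₁) := hLge α β₁ hα0 hb10 (by linarith)
    have hL2 : Real.log 2 ≤ Real.log ((1+α/2)/β₂) := hLge α β₂ hα0 hb20 hb2
    have hc : 0 < Real.log (1+α/2) := Real.log_pos (by linarith)
    have h1 := hdiff α β₁ hα0 hb10
    have h2 := hdiff α β₂ hα0 hb20
    exact aux_beta _ _ _ _ (Real.log (1+α/2) - Real.log 1.25)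
      hD1 hD2 hDlt (by linarith) (by linarith) (by linarith) (by linarith) (by linarith)
  · -- bounds
    rintro α ⟨hα0, hα3⟩ β ⟨hβ0, hβ⟩
    simp only
    have hD : (0.909:ℝ) < Real.log (1.25/β) := hDge β hβ0 hβ
    have hL : Real.log 2 ≤ Real.log ((1+α/2)/β) := hLge α β hα0 hβ0 hβ
    have hde := hdiff α β hα0 hβ0
    have hc : 0 < Real.log (1+α/2) := Real.log_pos (by linarith)
    have hLle : Real.log ((1+α/2)/β) ≤ Real.log (1.25/β) + Real.log 2 := by
      have h1 : Real.log ((1+α/2)/β) ≤ Real.log (2.5/β) := by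
        apply Real.log_le_log (div_pos (by linarith) hβ0)
        rw [div_le_div_iff₀ hβ0 hβ0]; nlinarith
      have h2 : Real.log (2.5/β) = Real.log 2 + Real.log (1.25/β) := by
        rw [show (2.5:ℝ)/β = 2 * (1.25/β) by ring,
          Real.log_mul two_ne_zero (div_pos (by norm_num) hβ0).ne']
      linarith
    exact aux_bounds _ _ hD (by linarith) (by linarith) (by linarith)
end
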